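/- Let A, B ⊂ B(H) be C*-algebras with A ⊆_γ B. Suppose A has the local distance property LD_k on H, i.e. d(x, A′) ≤ k‖ad(x)|_A‖ for all x ∈ B(H), where A′ is the commutant of A. Then B′ ⊆_{2kγ} A′, i.e., every x in the unit ball of the commutant of B is within 2kγ of an element of the commutant of A. -/

import Mathlib

/-- The near inclusion `A ⊆_γ B`: every element of the closed unit ball of `A` lies within
distance `γ` of some element of `B`. -/
def nearIncl {E : Type*} [NormedRing E] (A B : Set E) (γ : ℝ) : Prop :=
  ∀ x ∈ A, ‖x‖ ≤ 1 → ∃ y ∈ B, ‖x - y‖ ≤ γ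

/-- The Kadison–Kastler distance between two subsets of a C*-algebra: the infimum of all
`γ > 0` such that each element of the unit ball of either set is within `γ` of an element
of the unit ball of the other. -/
noncomputable def kkDist {E : Type*} [NormedRing E] (A B : Set E) : ℝ :=
  sInf {γ : ℝ | 0 < γ ∧
    (∀ x ∈ A, ‖x‖ ≤ 1 → ∃ y ∈ B, ‖y‖ ≤ 1 ∧ ‖x - y‖ < γ) ∧
    (∀ y ∈ B, ‖y‖ ≤ 1 → ∃ x ∈ A, ‖x‖ ≤ 1 ∧ ‖y - x‖ < γ)}

/-- The commutant of a set of bounded operators on a Hilbert space. -/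
noncomputable def commutant {H : Type*} [NormedAddCommGroup H] [InnerProductSpace ℂ H]
    [CompleteSpace H] (S : Set (H →L[ℂ] H)) : Set (H →L[ℂ] H) :=
  {x | ∀ a ∈ S, a * x = x * a}

/-- `adNorm S x` is `‖ad(x)|_S‖`, the norm of the derivation `a ↦ xa - ax` restricted to `S`. -/
noncomputable def adNorm {H : Type*} [NormedAddCommGroup H] [InnerProductSpace ℂ H]
    [CompleteSpace H] (S : Set (H →L[ℂ] H)) (x : H →L[ℂ] H) : ℝ :=
  sSup {r : ℝ | ∃ a ∈ S, ‖a‖ ≤ 1 ∧ r = ‖x * a - a * x‖}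

variable {H : Type*} [NormedAddCommGroup H] [InnerProductSpace ℂ H] [CompleteSpace H]

open scoped InnerProductSpace
open Filter Metric ContinuousLinearMap Topology

/-- A "weak-operator limit" existence lemma: if `x` can be approximated within `d + ε` by
elements of the commutant of `S` for every `ε > 0`, then there is an element of the
commutant within distance exactly `d`. -/
lemma exists_commutant_norm_le (S : Set (H →L[ℂ] H)) (x : H →L[ℂ] H) (d : ℝ) (hd : 0 ≤ d)
    (h : ∀ ε : ℝ, 0 < ε → ∃ y ∈ commutant S, ‖x - y‖ < d + ε) :
    ∃ y ∈ commutant S, ‖x - y‖ ≤ d := by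
  have hy : ∀ n : ℕ, ∃ y ∈ commutant S, ‖x - y‖ < d + 1 / ((n : ℝ) + 1) := by
    intro n
    exact h _ (by positivity)
  choose y hyS hyx using hy
  set U : Ultrafilter ℕ := Ultrafilter.of atTop with hUdef
  have hU : (U : Filter ℕ) ≤ atTop := Ultrafilter.of_le atTop
  set M : ℝ := ‖x‖ + d + 1 with hMdef
  have hM : 0 ≤ M := by positivity
  have hyM : ∀ n, ‖y n‖ ≤ M := by
    intro n
    have h1 : (1 : ℝ) / ((n : ℝ) + 1) ≤ 1 := by
      rw [div_le_one (by positivity)]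
      simp [Nat.cast_nonneg]
    calc ‖y n‖ = ‖x - (x - y n)‖ := by rw [sub_sub_cancel]
      _ ≤ ‖x‖ + ‖x - y n‖ := norm_sub_le _ _
      _ ≤ ‖x‖ + (d + 1 / ((n : ℝ) + 1)) := by linarith [hyx n]
      _ ≤ M := by rw [hMdef]; linarith
  -- bounded complex sequences converge along the ultrafilter
  have hlim : ∀ (c : ℕ → ℂ) (C : ℝ), (∀ n, ‖c n‖ ≤ C) →
      ∃ L : ℂ, Tendsto c (U : Filter ℕ) (𝓝 L) := by
    intro c C hc
    have hcpt : IsCompact (Metric.closedBall (0 : ℂ) C) := isCompact_closedBall _ _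
    have hle : (Ultrafilter.map c U : Filter ℂ) ≤ 𝓟 (Metric.closedBall (0 : ℂ) C) := by
      rw [Ultrafilter.coe_map, Filter.le_principal_iff, Filter.mem_map]
      exact Filter.univ_mem' (fun n => by simpa [Metric.mem_closedBall, dist_zero_right] using hc n)
    obtain ⟨L, -, hL⟩ := hcpt.ultrafilter_le_nhds (Ultrafilter.map c U) hle
    exact ⟨L, by rwa [Ultrafilter.coe_map] at hL⟩
  have key : ∀ ξ η : H, ∃ L : ℂ, Tendsto (fun n => ⟪y n ξ, η⟫_ℂ) (U : Filter ℕ) (𝓝 L) := by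
    intro ξ η
    refine hlim _ (M * ‖ξ‖ * ‖η‖) (fun n => ?_)
    calc ‖⟪y n ξ, η⟫_ℂ‖ ≤ ‖y n ξ‖ * ‖η‖ := norm_inner_le_norm _ _
      _ ≤ (M * ‖ξ‖) * ‖η‖ := by
          have := (y n).le_opNorm ξ
          have h2 : ‖y n ξ‖ ≤ M * ‖ξ‖ :=
            this.trans (mul_le_mul_of_nonneg_right (hyM n) (norm_nonneg _))
          exact mul_le_mul_of_nonneg_right h2 (norm_nonneg _)
      _ = M * ‖ξ‖ * ‖η‖ := by ring
  choose L hL using key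
  -- the linear functional `η ↦ L ξ η` for each `ξ`
  have hLbound : ∀ ξ η : H, ‖L ξ η‖ ≤ M * ‖ξ‖ * ‖η‖ := by
    intro ξ η
    refine le_of_tendsto (hL ξ η).norm (Filter.univ_mem' fun n => ?_)
    calc ‖⟪y n ξ, η⟫_ℂ‖ ≤ ‖y n ξ‖ * ‖η‖ := norm_inner_le_norm _ _
      _ ≤ M * ‖ξ‖ * ‖η‖ := by
          have h2 : ‖y n ξ‖ ≤ M * ‖ξ‖ :=
            ((y n).le_opNorm ξ).trans (mul_le_mul_of_nonneg_right (hyM n) (norm_nonneg _))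
          calc ‖y n ξ‖ * ‖η‖ ≤ (M * ‖ξ‖) * ‖η‖ :=
                mul_le_mul_of_nonneg_right h2 (norm_nonneg _)
            _ = M * ‖ξ‖ * ‖η‖ := by ring
  let g : H → (H →L[ℂ] ℂ) := fun ξ =>
    LinearMap.mkContinuous
      { toFun := L ξ
        map_add' := fun η η' => by
          refine tendsto_nhds_unique (hL ξ (η + η')) ?_
          have := (hL ξ η).add (hL ξ η')
          simpa [inner_add_right] using this
        map_smul' := fun a η => by
          refine tendsto_nhds_unique (hL ξ (a • η)) ?_
          have := (hL ξ η).const_mul a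
          simpa [inner_smul_right] using this }
      (M * ‖ξ‖) (fun η => hLbound ξ η)
  let Y0 : H → H := fun ξ => (InnerProductSpace.toDual ℂ H).symm (g ξ)
  have innerY0 : ∀ ξ η : H, ⟪Y0 ξ, η⟫_ℂ = L ξ η := by
    intro ξ η
    simp only [Y0]
    rw [InnerProductSpace.toDual_symm_apply]
    rfl
  have tendY : ∀ ξ η : H, Tendsto (fun n => ⟪y n ξ, η⟫_ℂ) (U : Filter ℕ) (𝓝 ⟪Y0 ξ, η⟫_ℂ) := by
    intro ξ η
    rw [innerY0]
    exact hL ξ η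
  have hY0add : ∀ ξ ξ' : H, Y0 (ξ + ξ') = Y0 ξ + Y0 ξ' := by
    intro ξ ξ'
    refine ext_inner_right ℂ (fun η => ?_)
    have h1 : Tendsto (fun n => ⟪y n (ξ + ξ'), η⟫_ℂ) (U : Filter ℕ)
        (𝓝 (⟪Y0 ξ, η⟫_ℂ + ⟪Y0 ξ', η⟫_ℂ)) := by
      have := (tendY ξ η).add (tendY ξ' η)
      simpa [inner_add_left, map_add] using this
    have h2 := tendsto_nhds_unique (tendY (ξ + ξ') η) h1
    rw [h2, inner_add_left]
  have hY0smul : ∀ (a : ℂ) (ξ : H), Y0 (a • ξ) = a • Y0 ξ := by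
    intro a ξ
    refine ext_inner_right ℂ (fun η => ?_)
    have h1 : Tendsto (fun n => ⟪y n (a • ξ), η⟫_ℂ) (U : Filter ℕ)
        (𝓝 ((starRingEnd ℂ) a * ⟪Y0 ξ, η⟫_ℂ)) := by
      have := (tendY ξ η).const_mul ((starRingEnd ℂ) a)
      simpa [map_smul, inner_smul_left, mul_comm] using this
    have h2 := tendsto_nhds_unique (tendY (a • ξ) η) h1
    rw [h2, inner_smul_left]
  have hY0bound : ∀ ξ : H, ‖Y0 ξ‖ ≤ M * ‖ξ‖ := by
    intro ξ
    have h1 : ‖Y0 ξ‖ = ‖g ξ‖ := LinearIsometryEquiv.norm_map _ _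
    rw [h1]
    exact LinearMap.mkContinuous_norm_le _ (by positivity) _
  let Y : H →L[ℂ] H :=
    LinearMap.mkContinuous
      { toFun := Y0, map_add' := hY0add, map_smul' := hY0smul } M hY0bound
  have hYapp : ∀ ξ : H, Y ξ = Y0 ξ := fun _ => rfl
  have tendY' : ∀ ξ η : H, Tendsto (fun n => ⟪y n ξ, η⟫_ℂ) (U : Filter ℕ) (𝓝 ⟪Y ξ, η⟫_ℂ) := by
    intro ξ η; rw [hYapp]; exact tendY ξ η
  refine ⟨Y, ?_, ?_⟩
  · -- Y is in the commutant
    intro a ha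
    ext ξ
    refine ext_inner_right ℂ (fun η => ?_)
    have hcomm : ∀ n ξ', a (y n ξ') = y n (a ξ') := by
      intro n ξ'
      have h := congrArg (fun T : H →L[ℂ] H => T ξ') (hyS n a ha)
      simpa [ContinuousLinearMap.mul_apply] using h
    have h1 : Tendsto (fun n => ⟪y n (a ξ), η⟫_ℂ) (U : Filter ℕ) (𝓝 ⟪Y (a ξ), η⟫_ℂ) :=
      tendY' (a ξ) η
    have h2 : Tendsto (fun n => ⟪y n (a ξ), η⟫_ℂ) (U : Filter ℕ)
        (𝓝 ⟪Y ξ, ContinuousLinearMap.adjoint a η⟫_ℂ) := by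
      have := tendY' ξ (ContinuousLinearMap.adjoint a η)
      refine this.congr (fun n => ?_)
      rw [ContinuousLinearMap.adjoint_inner_right, hcomm n ξ]
    have h3 : ⟪Y (a ξ), η⟫_ℂ = ⟪Y ξ, ContinuousLinearMap.adjoint a η⟫_ℂ :=
      tendsto_nhds_unique h1 h2
    calc ⟪(a * Y) ξ, η⟫_ℂ = ⟪a (Y ξ), η⟫_ℂ := rfl
      _ = ⟪Y ξ, ContinuousLinearMap.adjoint a η⟫_ℂ :=
          (ContinuousLinearMap.adjoint_inner_right a (Y ξ) η).symm
      _ = ⟪Y (a ξ), η⟫_ℂ := h3.symm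
      _ = ⟪(Y * a) ξ, η⟫_ℂ := rfl
  · -- the norm bound
    have hb : ∀ ξ η : H, ‖⟪(x - Y) ξ, η⟫_ℂ‖ ≤ d * (‖ξ‖ * ‖η‖) := by
      intro ξ η
      have hsub : ⟪(x - Y) ξ, η⟫_ℂ = ⟪x ξ, η⟫_ℂ - ⟪Y ξ, η⟫_ℂ := by
        rw [ContinuousLinearMap.sub_apply, inner_sub_left]
      have htd : Tendsto (fun n => ‖⟪(x - y n) ξ, η⟫_ℂ‖) (U : Filter ℕ)
          (𝓝 ‖⟪(x - Y) ξ, η⟫_ℂ‖) := by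
        have h1 : Tendsto (fun n => ⟪x ξ, η⟫_ℂ - ⟪y n ξ, η⟫_ℂ) (U : Filter ℕ)
            (𝓝 (⟪x ξ, η⟫_ℂ - ⟪Y ξ, η⟫_ℂ)) := tendsto_const_nhds.sub (tendY' ξ η)
        rw [hsub]
        refine (h1.congr (fun n => ?_)).norm
        rw [ContinuousLinearMap.sub_apply, inner_sub_left]
      have hbd : Tendsto (fun n : ℕ => (d + 1 / ((n : ℝ) + 1)) * (‖ξ‖ * ‖η‖))
          (U : Filter ℕ) (𝓝 (d * (‖ξ‖ * ‖η‖))) := by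
        have h0 : Tendsto (fun n : ℕ => 1 / ((n : ℝ) + 1)) atTop (𝓝 0) :=
          tendsto_one_div_add_atTop_nhds_zero_nat
        have := (((tendsto_const_nhds : Filter.Tendsto (fun _ : ℕ => d) atTop (𝓝 d))).add h0).mul_const (‖ξ‖ * ‖η‖)
        rw [add_zero] at this
        exact this.mono_left hU
      refine le_of_tendsto_of_tendsto htd hbd (Filter.univ_mem' fun n => ?_)
      calc ‖⟪(x - y n) ξ, η⟫_ℂ‖ ≤ ‖(x - y n) ξ‖ * ‖η‖ := norm_inner_le_norm _ _
        _ ≤ (‖x - y n‖ * ‖ξ‖) * ‖η‖ :=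
            mul_le_mul_of_nonneg_right ((x - y n).le_opNorm ξ) (norm_nonneg _)
        _ ≤ ((d + 1 / ((n : ℝ) + 1)) * ‖ξ‖) * ‖η‖ := by
            have := (hyx n).le
            have h2 : ‖x - y n‖ * ‖ξ‖ ≤ (d + 1 / ((n : ℝ) + 1)) * ‖ξ‖ :=
              mul_le_mul_of_nonneg_right this (norm_nonneg _)
            exact mul_le_mul_of_nonneg_right h2 (norm_nonneg _)
        _ = (d + 1 / ((n : ℝ) + 1)) * (‖ξ‖ * ‖η‖) := by ring
    refine ContinuousLinearMap.opNorm_le_bound _ hd (fun ξ => ?_)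
    set v := (x - Y) ξ with hv
    rcases eq_or_lt_of_le (norm_nonneg v) with hv0 | hv0
    · rw [← hv0]
      positivity
    · have := hb ξ v
      have hvv : ‖⟪v, v⟫_ℂ‖ = ‖v‖ ^ 2 := by
        rw [inner_self_eq_norm_sq_to_K]
        simp [norm_pow, Complex.norm_real, abs_norm]
      rw [hvv] at this
      have h3 : ‖v‖ * ‖v‖ ≤ (d * ‖ξ‖) * ‖v‖ := by
        calc ‖v‖ * ‖v‖ = ‖v‖ ^ 2 := (sq ‖v‖).symm
          _ ≤ d * (‖ξ‖ * ‖v‖) := this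
          _ = (d * ‖ξ‖) * ‖v‖ := by ring
      exact le_of_mul_le_mul_right h3 hv0

/-- Proposition 2.5: if `A ⊆_γ B` and `A` has the local distance property `LD_k` on `H`,
then `B' ⊆_{2kγ} A'`. -/
theorem commutant_nearIncl_of_LD (A B : NonUnitalStarSubalgebra ℂ (H →L[ℂ] H)) (γ k : ℝ)
    (hγ : 0 < γ) (hk : 0 < k)
    (hAB : nearIncl (A : Set (H →L[ℂ] H)) (B : Set (H →L[ℂ] H)) γ)
    (hLD : ∀ x : H →L[ℂ] H,
      Metric.infDist x (commutant (A : Set (H →L[ℂ] H))) ≤ k * adNorm (A : Set (H →L[ℂ] H)) x) :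
    nearIncl (commutant (B : Set (H →L[ℂ] H))) (commutant (A : Set (H →L[ℂ] H))) (2 * k * γ) := by
  intro x hxB hx1
  have hA2γ : adNorm (A : Set (H →L[ℂ] H)) x ≤ 2 * γ := by
    apply Real.sSup_le _ (by positivity)
    rintro r ⟨a, haA, ha1, rfl⟩
    obtain ⟨b, hbB, hab⟩ := hAB a haA ha1
    have hxb : b * x = x * b := hxB b hbB
    have hrw : x * a - a * x = x * (a - b) - (a - b) * x := by
      rw [mul_sub, sub_mul, hxb]; abel
    rw [hrw]
    calc ‖x * (a - b) - (a - b) * x‖ ≤ ‖x * (a - b)‖ + ‖(a - b) * x‖ := norm_sub_le _ _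
      _ ≤ ‖x‖ * ‖a - b‖ + ‖a - b‖ * ‖x‖ := add_le_add (norm_mul_le _ _) (norm_mul_le _ _)
      _ ≤ 2 * γ := by nlinarith [norm_nonneg x, norm_nonneg (a - b)]
  have hinf : Metric.infDist x (commutant (A : Set (H →L[ℂ] H))) ≤ 2 * k * γ := by
    refine (hLD x).trans ?_
    nlinarith
  refine exists_commutant_norm_le _ x _ (by positivity) (fun ε hε => ?_)
  have hne : (commutant (A : Set (H →L[ℂ] H))).Nonempty := ⟨0, fun a _ => by simp⟩
  obtain ⟨z, hz, hdz⟩ := (Metric.infDist_lt_iff hne).mp (lt_of_le_of_lt hinf (lt_add_of_pos_right _ hε))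
  exact ⟨z, hz, by rwa [dist_eq_norm] at hdz⟩
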